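/- Let ℓ > 0, y > 1, x ∈ ℝ, and for n ∈ ℤ set ξ_n = nℓ − x, and define Y_n^± = y·sinh²(ξ_n)/tanh(ℓ) ± y·sinh(ξ_n)·√(cosh²(ξ_n) − y⁻²) and X_n^± = sinh(ξ_n)·cosh(ξ_n)/tanh(ℓ) ± cosh(ξ_n)·√(cosh²(ξ_n) − y⁻²) + n. Then the projective point [1 : Y_n^± : X_n^±] converges as n → +∞ to [0 : y : 1] and as n → −∞ to [0 : y : −1]. -/

import Mathlib

open Filter Real

private lemma exp_div_shift (x : ℝ) :
    Tendsto (fun t : ℝ => Real.exp t / (t + x)) atTop atTop := by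
  have h1 : Tendsto (fun u : ℝ => Real.exp u / u) atTop atTop := by
    simpa using Real.tendsto_exp_div_pow_atTop 1
  have h2 : Tendsto (fun t : ℝ => Real.exp (t + x) / (t + x)) atTop atTop :=
    h1.comp (tendsto_atTop_add_const_right _ x tendsto_id)
  have h3 := h2.const_mul_atTop (Real.exp_pos (-x))
  refine h3.congr fun t => ?_
  rw [mul_div_assoc', ← Real.exp_add]
  congr 2
  ring

private lemma sinh_tendsto_atTop : Tendsto Real.sinh atTop atTop := by
  have h1 : Tendsto (fun t : ℝ => (Real.exp t - 1) / 2) atTop atTop :=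
    (tendsto_atTop_add_const_right _ (-1) Real.tendsto_exp_atTop).atTop_div_const two_pos
  refine tendsto_atTop_mono' _ ?_ h1
  filter_upwards [eventually_ge_atTop (0:ℝ)] with t ht
  have hexp : Real.exp (-t) ≤ 1 := Real.exp_le_one_iff.2 (by linarith)
  rw [Real.sinh_eq]
  have := Real.exp_pos t
  nlinarith

private lemma aux_atTop
    (ℓ y x : ℝ) (hℓ : ℓ > 0) (hy : y > 1)
    (s : ℝ) (hs : s = 1 ∨ s = -1)
    (ξ : ℤ → ℝ) (hξ : ∀ n : ℤ, ξ n = (n : ℝ) * ℓ - x)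
    (Y X : ℤ → ℝ)
    (hY : ∀ n : ℤ, Y n = y * (Real.sinh (ξ n))^2 / Real.tanh ℓ
        + s * (y * Real.sinh (ξ n) * Real.sqrt ((Real.cosh (ξ n))^2 - (y⁻¹)^2)))
    (hX : ∀ n : ℤ, X n = Real.sinh (ξ n) * Real.cosh (ξ n) / Real.tanh ℓ
        + s * (Real.cosh (ξ n) * Real.sqrt ((Real.cosh (ξ n))^2 - (y⁻¹)^2)) + (n : ℝ)) :
    Tendsto X atTop atTop ∧ Tendsto (fun n => Y n / X n) atTop (nhds y) := by
  have htanh0 : 0 < Real.tanh ℓ := by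
    rw [Real.tanh_eq_sinh_div_cosh]
    exact div_pos (Real.sinh_pos_iff.2 hℓ) (Real.cosh_pos ℓ)
  have htanh1 : Real.tanh ℓ < 1 := by
    rw [Real.tanh_eq_sinh_div_cosh]
    rw [div_lt_one (Real.cosh_pos ℓ)]
    nlinarith [Real.cosh_sub_sinh ℓ, Real.exp_pos (-ℓ)]
  set c : ℝ := (Real.tanh ℓ)⁻¹ with hcdef
  have hc : 1 < c := one_lt_inv_iff₀.2 ⟨htanh0, htanh1⟩
  have hc1 : 0 < c - 1 := by linarith
  have hξtop : Tendsto ξ atTop atTop := by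
    have h1 : Tendsto (fun n : ℤ => (n : ℝ) * ℓ) atTop atTop :=
      tendsto_intCast_atTop_atTop.atTop_mul_const hℓ
    have h2 := tendsto_atTop_add_const_right atTop (-x) h1
    exact h2.congr fun n => by rw [hξ]; ring
  -- abbreviations
  set S : ℤ → ℝ := fun n => Real.sinh (ξ n) with hSdef
  set C : ℤ → ℝ := fun n => Real.cosh (ξ n) with hCdef
  set R : ℤ → ℝ := fun n => Real.sqrt ((Real.cosh (ξ n))^2 - (y⁻¹)^2) with hRdef
  have hXc : ∀ n, X n = S n * C n * c + s * (C n * R n) + (n : ℝ) := by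
    intro n; rw [hX n, div_eq_mul_inv]
  have hev1 : ∀ᶠ n : ℤ in atTop, 0 ≤ ξ n := hξtop.eventually (eventually_ge_atTop 0)
  have hev2 : ∀ᶠ n : ℤ in atTop, 2 ≤ (c - 1) * S n := by
    have h : Tendsto (fun n : ℤ => (c - 1) * S n) atTop atTop :=
      (sinh_tendsto_atTop.comp hξtop).const_mul_atTop hc1
    exact h.eventually_ge_atTop 2
  have hev3 : ∀ᶠ n : ℤ in atTop, (1 : ℤ) ≤ n := eventually_ge_atTop 1
  -- pointwise facts
  have hRC : ∀ n, R n ≤ C n := by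
    intro n
    have h1 : Real.sqrt ((Real.cosh (ξ n))^2 - (y⁻¹)^2) ≤ Real.sqrt ((Real.cosh (ξ n))^2) :=
      Real.sqrt_le_sqrt (by nlinarith [sq_nonneg (y⁻¹)])
    rwa [Real.sqrt_sq (Real.cosh_pos _).le] at h1
  have hR0 : ∀ n, 0 ≤ R n := fun n => Real.sqrt_nonneg _
  have hC1 : ∀ n, 1 ≤ C n := fun n => Real.one_le_cosh _
  -- lower bound on X
  have hlow : ∀ᶠ n : ℤ in atTop, (n : ℝ) + ((c - 1) * S n - 1) ≤ X n := by
    filter_upwards [hev1, hev2] with n h0 h2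
    have hS0 : 0 ≤ S n := Real.sinh_nonneg_iff.2 h0
    have hCS : C n - S n ≤ 1 := by
      have := Real.cosh_sub_sinh (ξ n)
      have h3 : Real.exp (-ξ n) ≤ 1 := Real.exp_le_one_iff.2 (by linarith)
      simp only [hSdef, hCdef]
      linarith
    have hC0 : (0:ℝ) < C n := lt_of_lt_of_le one_pos (hC1 n)
    have hCR : C n * R n ≤ C n * C n :=
      mul_le_mul_of_nonneg_left (hRC n) hC0.le
    have hkey : (0:ℝ) ≤ (C n - 1) * (c * S n - C n) := by
      apply mul_nonneg (by linarith [hC1 n])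
      nlinarith
    rw [hXc n]
    rcases hs with rfl | rfl
    · nlinarith [mul_nonneg hC0.le (hR0 n)]
    · nlinarith
  have hXge : ∀ᶠ n : ℤ in atTop, (n : ℝ) ≤ X n := by
    filter_upwards [hlow, hev2] with n h1 h2
    linarith
  have hXtop : Tendsto X atTop atTop :=
    tendsto_atTop_mono' _ hXge tendsto_intCast_atTop_atTop
  -- n / X n → 0
  have hD : Tendsto (fun t : ℝ => ((c - 1) * Real.sinh t - 1) / ((t + x) / ℓ)) atTop atTop := by
    set K : ℝ := (c - 1) / 2 + 1 with hKdef
    have hK0 : 0 < K := by rw [hKdef]; linarith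
    have hE : Tendsto (fun t : ℝ => (c - 1) * ℓ / 2 * (Real.exp t / (t + x)) - K * ℓ)
        atTop atTop := by
      have h1 := (exp_div_shift x).const_mul_atTop
        (show (0:ℝ) < (c - 1) * ℓ / 2 by positivity)
      have h2 := tendsto_atTop_add_const_right atTop (-(K * ℓ)) h1
      exact h2.congr fun t => by ring
    refine tendsto_atTop_mono' _ ?_ hE
    filter_upwards [eventually_ge_atTop (0:ℝ), eventually_ge_atTop (1 - x)] with t ht0 htx
    have htx1 : 1 ≤ t + x := by linarith
    have hden : (0:ℝ) < (t + x) / ℓ := div_pos (by linarith) hℓ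
    rw [le_div_iff₀ hden]
    have hkey : ((c - 1) * ℓ / 2 * (Real.exp t / (t + x)) - K * ℓ) * ((t + x) / ℓ)
        = (c - 1) / 2 * Real.exp t - K * (t + x) := by
      field_simp
    rw [hkey, Real.sinh_eq]
    have hexp : Real.exp (-t) ≤ 1 := Real.exp_le_one_iff.2 (by linarith)
    have hexp0 : 0 < Real.exp (-t) := Real.exp_pos _
    nlinarith [mul_nonneg hc1.le (sub_nonneg.2 hexp),
      mul_nonneg hK0.le (sub_nonneg.2 htx1)]
  have hg : Tendsto (fun t : ℝ => ((t + x) / ℓ) / ((c - 1) * Real.sinh t - 1))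
      atTop (nhds 0) := by
    have := hD.inv_tendsto_atTop
    refine this.congr fun t => ?_
    simp only [Pi.inv_apply, inv_div]
  have hdiv0 : Tendsto (fun n : ℤ => (n : ℝ) / X n) atTop (nhds 0) := by
    refine tendsto_of_tendsto_of_tendsto_of_le_of_le' tendsto_const_nhds
      (hg.comp hξtop) ?_ ?_
    · filter_upwards [hev3, hXge] with n h3 h1
      have hn1 : (1:ℝ) ≤ (n:ℝ) := by exact_mod_cast h3
      exact div_nonneg (by linarith) (by linarith)
    · filter_upwards [hlow, hev2, hev3] with n h1 h2 h3
      have hn1 : (1:ℝ) ≤ (n:ℝ) := by exact_mod_cast h3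
      have hden : (0:ℝ) < (c - 1) * S n - 1 := by linarith
      have hXn : (c - 1) * S n - 1 ≤ X n := by linarith
      have h4 : (n:ℝ) / X n ≤ (n:ℝ) / ((c - 1) * S n - 1) :=
        div_le_div_of_nonneg_left (by linarith) hden hXn
      have h5 : (ξ n + x) / ℓ = (n : ℝ) := by
        rw [hξ n]; field_simp; ring
      calc (n:ℝ) / X n ≤ (n:ℝ) / ((c - 1) * S n - 1) := h4
        _ = ((ξ n + x) / ℓ) / ((c - 1) * Real.sinh (ξ n) - 1) := by rw [h5]
  -- tanh ξ n → 1
  have hT : Tendsto (fun n : ℤ => S n / C n) atTop (nhds 1) := by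
    have h0 : Tendsto (fun t : ℝ => Real.exp (-t) / Real.cosh t) atTop (nhds 0) := by
      have hexpneg : Tendsto (fun t : ℝ => Real.exp (-t)) atTop (nhds 0) :=
        Real.tendsto_exp_atBot.comp tendsto_neg_atTop_atBot
      refine tendsto_of_tendsto_of_tendsto_of_le_of_le tendsto_const_nhds hexpneg
        (fun t => by positivity) (fun t => div_le_self (Real.exp_pos _).le (Real.one_le_cosh t))
    have h1 : Tendsto (fun t : ℝ => 1 - Real.exp (-t) / Real.cosh t) atTop (nhds 1) := by
      simpa using tendsto_const_nhds.sub h0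
    refine (h1.comp hξtop).congr fun n => ?_
    have hc0 : Real.cosh (ξ n) ≠ 0 := (Real.cosh_pos _).ne'
    have h2 := Real.cosh_sub_sinh (ξ n)
    simp only [Function.comp_apply, hSdef, hCdef]
    field_simp
    linarith
  -- conclusion
  have hmain : Tendsto (fun n : ℤ => y * (S n / C n) * (1 - (n : ℝ) / X n))
      atTop (nhds y) := by
    have h := ((tendsto_const_nhds : Tendsto (fun _ : ℤ => y) atTop (nhds y)).mul hT).mul
      ((tendsto_const_nhds : Tendsto (fun _ : ℤ => (1:ℝ)) atTop (nhds 1)).sub hdiv0)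
    simpa using h
  refine ⟨hXtop, hmain.congr' ?_⟩
  filter_upwards [hXge, hev3] with n h1 h3
  have hn1 : (1:ℝ) ≤ (n:ℝ) := by exact_mod_cast h3
  have hXpos : 0 < X n := by linarith
  have hc0 : C n ≠ 0 := (Real.cosh_pos _).ne'
  have hW : X n - (n : ℝ) = S n * C n * c + s * (C n * R n) := by rw [hXc n]; ring
  have hYc : Y n = y * S n ^ 2 * c + s * (y * S n * R n) := by
    rw [hY n, div_eq_mul_inv]
  have key : y * (S n / C n) * (X n - (n:ℝ)) = Y n := by
    rw [hW, hYc]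
    field_simp
  calc y * (S n / C n) * (1 - (n : ℝ) / X n)
      = (y * (S n / C n) * (X n - (n:ℝ))) / X n := by
        rw [mul_div_assoc]
        congr 1
        rw [sub_div, div_self hXpos.ne']
    _ = Y n / X n := by rw [key]

theorem endpoints_limit
    (ℓ y x : ℝ) (hℓ : ℓ > 0) (hy : y > 1)
    (s : ℝ) (hs : s = 1 ∨ s = -1)
    (ξ : ℤ → ℝ) (hξ : ∀ n : ℤ, ξ n = (n : ℝ) * ℓ - x)
    (Y X : ℤ → ℝ)
    (hY : ∀ n : ℤ, Y n = y * (Real.sinh (ξ n))^2 / Real.tanh ℓ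
        + s * (y * Real.sinh (ξ n) * Real.sqrt ((Real.cosh (ξ n))^2 - (y⁻¹)^2)))
    (hX : ∀ n : ℤ, X n = Real.sinh (ξ n) * Real.cosh (ξ n) / Real.tanh ℓ
        + s * (Real.cosh (ξ n) * Real.sqrt ((Real.cosh (ξ n))^2 - (y⁻¹)^2)) + (n : ℝ)) :
    (Filter.Tendsto X Filter.atTop Filter.atTop
      ∧ Filter.Tendsto (fun n => Y n / X n) Filter.atTop (nhds y))
    ∧ (Filter.Tendsto X Filter.atBot Filter.atBot
      ∧ Filter.Tendsto (fun n => Y n / X n) Filter.atBot (nhds (-y))) := by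
  refine ⟨aux_atTop ℓ y x hℓ hy s hs ξ hξ Y X hY hX, ?_⟩
  -- reflected data
  set ξ' : ℤ → ℝ := fun m => (m : ℝ) * ℓ - (-x) with hξ'def
  set Y' : ℤ → ℝ := fun m => Y (-m) with hY'def
  set X' : ℤ → ℝ := fun m => -X (-m) with hX'def
  have hξneg : ∀ m : ℤ, ξ (-m) = -ξ' m := by
    intro m; rw [hξ]; simp [hξ'def]; ring
  have hξ' : ∀ m : ℤ, ξ' m = (m : ℝ) * ℓ - (-x) := fun m => rfl
  have hY' : ∀ m : ℤ, Y' m = y * (Real.sinh (ξ' m))^2 / Real.tanh ℓ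
      + (-s) * (y * Real.sinh (ξ' m) * Real.sqrt ((Real.cosh (ξ' m))^2 - (y⁻¹)^2)) := by
    intro m
    rw [hY'def]
    simp only [hY (-m), hξneg m, Real.sinh_neg, Real.cosh_neg]
    ring
  have hX' : ∀ m : ℤ, X' m = Real.sinh (ξ' m) * Real.cosh (ξ' m) / Real.tanh ℓ
      + (-s) * (Real.cosh (ξ' m) * Real.sqrt ((Real.cosh (ξ' m))^2 - (y⁻¹)^2)) + (m : ℝ) := by
    intro m
    rw [hX'def]
    simp only [hX (-m), hξneg m, Real.sinh_neg, Real.cosh_neg, Int.cast_neg]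
    ring
  have hs' : (-s) = 1 ∨ (-s) = -1 := by rcases hs with rfl | rfl <;> simp
  obtain ⟨h1, h2⟩ := aux_atTop ℓ y (-x) hℓ hy (-s) hs' ξ' hξ' Y' X' hY' hX'
  constructor
  · rw [show (atBot : Filter ℤ) = Filter.map Neg.neg atTop from Filter.map_neg_atTop.symm,
      Filter.tendsto_map'_iff]
    have : Tendsto (fun m : ℤ => -X' m) atTop atBot := tendsto_neg_atTop_atBot.comp h1
    refine this.congr fun m => ?_
    simp [hX'def]
  · rw [show (atBot : Filter ℤ) = Filter.map Neg.neg atTop from Filter.map_neg_atTop.symm,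
      Filter.tendsto_map'_iff]
    have : Tendsto (fun m : ℤ => -(Y' m / X' m)) atTop (nhds (-y)) := h2.neg
    refine this.congr fun m => ?_
    simp only [Function.comp_apply, hY'def, hX'def]
    rw [div_neg, neg_neg]
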